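/- The generalized survival function admits the representation μ_𝒜(x, α) = Σ_{i=0}^{κ-1} (min_{k ≤ i} μ(E_k^c)) · 1_{[A_i, A_{i+1})}(α) for every α ∈ [0, ∞), where A_κ = +∞. -/
import Mathlib


open scoped Classical

/-- `𝒜` is a family of conditional aggregation operators (FCA) with respect to the
collection `𝓔`: every operator is nonnegative, monotone in the coordinates of the
conditioning set, vanishes on the indicator of the complement, and `𝒜(·|∅) = 0`. -/
def IsFCA (n : ℕ) (𝓔 : Finset (Finset (Fin n)))
    (𝒜 : Finset (Fin n) → (Fin n → ℝ) → ℝ) : Prop :=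
  (∀ E ∈ 𝓔, ∀ x : Fin n → ℝ, 0 ≤ 𝒜 E x) ∧
  (∀ E ∈ 𝓔, E ≠ ∅ → ∀ x y : Fin n → ℝ, (∀ i ∈ E, x i ≤ y i) → 𝒜 E x ≤ 𝒜 E y) ∧
  (∀ E ∈ 𝓔, E ≠ ∅ → 𝒜 E (fun i => if i ∈ E then 0 else 1) = 0) ∧
  (∀ x : Fin n → ℝ, 𝒜 ∅ x = 0)

/-- `μ` is a monotone measure on the complements of the sets of `𝓔`:
`μ ∅ = 0`, nonnegative, and monotone. -/
def IsMonMeasure (n : ℕ) (𝓔 : Finset (Finset (Fin n)))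
    (μ : Finset (Fin n) → ℝ) : Prop :=
  μ ∅ = 0 ∧ (∀ E ∈ 𝓔, 0 ≤ μ Eᶜ) ∧
  (∀ E ∈ 𝓔, ∀ F ∈ 𝓔, Eᶜ ⊆ Fᶜ → μ Eᶜ ≤ μ Fᶜ)

/-- The generalized survival function
`μ_𝒜(x, α) = min { μ(Eᶜ) : 𝒜(x|E) ≤ α, E ∈ 𝓔 }`. -/
noncomputable def gsf {n : ℕ} (𝓔 : Finset (Finset (Fin n)))
    (𝒜 : Finset (Fin n) → (Fin n → ℝ) → ℝ)
    (μ : Finset (Fin n) → ℝ) (x : Fin n → ℝ) (α : ℝ) : ℝ :=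
  sInf {m : ℝ | ∃ E ∈ 𝓔, 𝒜 E x ≤ α ∧ m = μ Eᶜ}

/-- Theorem (zjednodusenie_def (ii)): the generalized survival function equals
`Σ_{i=0}^{κ-1} (min_{k ≤ i} μ(E_kᶜ)) · 1_{[A_i, A_{i+1})}(α)`, with `A_κ = +∞`
(so the last interval is `[A_{κ-1}, ∞)`). -/
theorem stmt1 {n κ : ℕ} (𝓔 : Finset (Finset (Fin n)))
    (𝒜 : Finset (Fin n) → (Fin n → ℝ) → ℝ) (μ : Finset (Fin n) → ℝ)
    (x : Fin n → ℝ)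
    (hempty : ∅ ∈ 𝓔) (hU : (Finset.univ : Finset (Fin n)) ∈ 𝓔)
    (hA : IsFCA n 𝓔 𝒜) (hμ : IsMonMeasure n 𝓔 μ) (hx : ∀ i, 0 ≤ x i)
    (hκ : 𝓔.card = κ)
    (Estar : Fin κ → Finset (Fin n))
    (hmem : ∀ i, Estar i ∈ 𝓔) (hinj : Function.Injective Estar)
    (hAmono : ∀ i j : Fin κ, i ≤ j → 𝒜 (Estar i) x ≤ 𝒜 (Estar j) x)
    (α : ℝ) (hα : 0 ≤ α) :
    gsf 𝓔 𝒜 μ x α =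
      ∑ i : Fin κ,
        (sInf {m : ℝ | ∃ k : Fin κ, k ≤ i ∧ m = μ (Estar k)ᶜ}) *
          (if h : (i : ℕ) + 1 < κ then
            Set.indicator
              (Set.Ico (𝒜 (Estar i) x) (𝒜 (Estar ⟨(i : ℕ) + 1, h⟩) x))
              (fun _ => (1 : ℝ)) α
          else
            Set.indicator (Set.Ici (𝒜 (Estar i) x)) (fun _ => (1 : ℝ)) α) := by
  classical
  -- surjectivity of Estar onto 𝓔
  have hsurj : ∀ E ∈ 𝓔, ∃ k : Fin κ, Estar k = E := by
    intro E hE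
    have himg : Finset.univ.image Estar ⊆ 𝓔 := by
      intro F hF
      rcases Finset.mem_image.mp hF with ⟨k, _, rfl⟩
      exact hmem k
    have hcard : 𝓔.card ≤ (Finset.univ.image Estar).card := by
      rw [Finset.card_image_of_injective _ hinj, Finset.card_univ, Fintype.card_fin, hκ]
    have heq := Finset.eq_of_subset_of_card_le himg hcard
    rw [← heq] at hE
    rcases Finset.mem_image.mp hE with ⟨k, _, hk⟩
    exact ⟨k, hk⟩
  set S : Finset (Fin κ) := Finset.univ.filter (fun i => 𝒜 (Estar i) x ≤ α) with hSdef
  obtain ⟨k0, hk0⟩ := hsurj ∅ hempty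
  have hSne : S.Nonempty := ⟨k0, by
    simp only [hSdef, Finset.mem_filter, Finset.mem_univ, true_and, hk0]
    rw [hA.2.2.2 x]; exact hα⟩
  set i₀ := S.max' hSne with hi₀def
  have hi₀mem : 𝒜 (Estar i₀) x ≤ α := by
    have := S.max'_mem hSne
    simpa [hSdef] using this
  have hle : ∀ k, 𝒜 (Estar k) x ≤ α → k ≤ i₀ := fun k hk =>
    S.le_max' k (by simp [hSdef, hk])
  have hgt : ∀ k, i₀ < k → α < 𝒜 (Estar k) x := by
    intro k hk
    by_contra h
    push_neg at h
    exact absurd (hle k h) (not_le.mpr hk)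
  have hset : {m : ℝ | ∃ E ∈ 𝓔, 𝒜 E x ≤ α ∧ m = μ Eᶜ}
      = {m : ℝ | ∃ k : Fin κ, k ≤ i₀ ∧ m = μ (Estar k)ᶜ} := by
    ext m
    constructor
    · rintro ⟨E, hE, hEα, rfl⟩
      obtain ⟨k, rfl⟩ := hsurj E hE
      exact ⟨k, hle k hEα, rfl⟩
    · rintro ⟨k, hk, rfl⟩
      exact ⟨Estar k, hmem k, le_trans (hAmono k i₀ hk) hi₀mem, rfl⟩
  rw [Finset.sum_eq_single_of_mem i₀ (Finset.mem_univ i₀)]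
  · have hone : (if h : (i₀ : ℕ) + 1 < κ then
        Set.indicator (Set.Ico (𝒜 (Estar i₀) x) (𝒜 (Estar ⟨(i₀ : ℕ) + 1, h⟩) x))
          (fun _ => (1 : ℝ)) α
      else Set.indicator (Set.Ici (𝒜 (Estar i₀) x)) (fun _ => (1 : ℝ)) α) = 1 := by
      split_ifs with h
      · rw [Set.indicator_of_mem]
        exact ⟨hi₀mem, hgt ⟨(i₀ : ℕ) + 1, h⟩ (by simp [Fin.lt_def])⟩
      · rw [Set.indicator_of_mem]
        exact hi₀mem
    rw [hone, mul_one, gsf, hset]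
  · intro i _ hne
    have hzero : (if h : (i : ℕ) + 1 < κ then
        Set.indicator (Set.Ico (𝒜 (Estar i) x) (𝒜 (Estar ⟨(i : ℕ) + 1, h⟩) x))
          (fun _ => (1 : ℝ)) α
      else Set.indicator (Set.Ici (𝒜 (Estar i) x)) (fun _ => (1 : ℝ)) α) = 0 := by
      rcases lt_or_gt_of_ne hne with hlt | hgt'
      · have hh : (i : ℕ) + 1 < κ :=
          lt_of_le_of_lt (Nat.succ_le_of_lt (Fin.lt_def.mp hlt)) i₀.isLt
        rw [dif_pos hh, Set.indicator_of_notMem]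
        intro hmem'
        have h1 : 𝒜 (Estar ⟨(i : ℕ) + 1, hh⟩) x ≤ α :=
          le_trans (hAmono _ i₀ (by
            simp only [Fin.le_def]
            exact Nat.succ_le_of_lt (Fin.lt_def.mp hlt))) hi₀mem
        exact absurd hmem'.2 (not_lt.mpr h1)
      · have hα' : α < 𝒜 (Estar i) x := hgt i hgt'
        split_ifs with h
        · rw [Set.indicator_of_notMem]
          exact fun hm => absurd hm.1 (not_le.mpr hα')
        · rw [Set.indicator_of_notMem]
          simpa using not_le.mpr hα'
    rw [hzero, mul_zero]
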